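/- There exists a constant C > 0, depending only on n, R_s, sup_{[0,R_s]}|p| and sup_{[0,R_s]}|b|, such that for every integer k ≥ 3 and every φ ∈ C([0,R_s];ℝ): max_{0≤r≤R_s}|(𝒦_k φ)(r)| ≤ C k^{−1} max_{0≤r≤R_s}|φ(r)|. (This is the operator bound established in the proof of Lemma 5.1, with p = p_s' and b = g_p*.) -/

import Mathlib

open Set Real intervalIntegral MeasureTheory

set_option maxHeartbeats 1000000

/-- Sup-norm bound for the operator `𝒦_k` from the proof of Lemma 5.1:
there is `C > 0` independent of `k` with `‖𝒦_k φ‖_∞ ≤ C k⁻¹ ‖φ‖_∞` for every `k ≥ 3`. -/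
theorem stmt_11
    (n : ℕ) (hn : 2 ≤ n) (Rs : ℝ) (hRs : 0 < Rs)
    (p b : ℝ → ℝ) (hpcont : ContinuousOn p (Icc 0 Rs)) (hbcont : ContinuousOn b (Icc 0 Rs))
    (𝒦 : ℕ → (ℝ → ℝ) → ℝ → ℝ)
    (h𝒦 : ∀ k : ℕ, 2 ≤ k → ∀ φ : ℝ → ℝ, ∀ r : ℝ,
      𝒦 k φ r = r ^ (k - 1) * p r *
        ((k / (n + 2 * (k - 1) : ℝ)) * (∫ ρ in r..Rs, b ρ * φ ρ / ρ ^ (k - 1))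
         - (1 - k / (n + 2 * (k - 1) : ℝ)) *
             (∫ ρ in (0:ℝ)..r, ρ ^ (n + k - 1) * b ρ * φ ρ) / r ^ (n + 2 * (k - 1))
         + (1 - k / (n + 2 * (k - 1) : ℝ)) *
             (∫ ρ in (0:ℝ)..Rs, ρ ^ (n + k - 1) * b ρ * φ ρ) / Rs ^ (n + 2 * (k - 1)))) :
    ∃ C > (0:ℝ), ∀ k : ℕ, 3 ≤ k → ∀ φ : ℝ → ℝ, ContinuousOn φ (Icc 0 Rs) →
      ∀ M : ℝ, (∀ r ∈ Icc (0:ℝ) Rs, |φ r| ≤ M) →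
        ∀ r ∈ Icc (0:ℝ) Rs, |𝒦 k φ r| ≤ C * (k : ℝ)⁻¹ * M := by
  obtain ⟨P, hP⟩ := isCompact_Icc.exists_bound_of_continuousOn hpcont
  obtain ⟨B, hB⟩ := isCompact_Icc.exists_bound_of_continuousOn hbcont
  have h0mem : (0:ℝ) ∈ Icc (0:ℝ) Rs := ⟨le_refl 0, hRs.le⟩
  have hP0 : 0 ≤ P := le_trans (norm_nonneg _) (hP 0 h0mem)
  have hB0 : 0 ≤ B := le_trans (norm_nonneg _) (hB 0 h0mem)
  refine ⟨12 * (P + 1) * (B + 1) * Rs, by positivity, ?_⟩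
  intro k hk φ hφ M hM r hr
  have hM0 : 0 ≤ M := le_trans (abs_nonneg _) (hM 0 h0mem)
  obtain ⟨m, rfl⟩ : ∃ m, k = m + 3 := ⟨k - 3, by omega⟩
  have hRHS0 : 0 ≤ 12 * (P + 1) * (B + 1) * Rs * ((m + 3 : ℕ) : ℝ)⁻¹ * M := by positivity
  obtain ⟨hr0, hrR⟩ := hr
  rw [h𝒦 (m + 3) (by omega) φ r]
  have e1 : m + 3 - 1 = m + 2 := rfl
  have e2 : n + (m + 3) - 1 = n + m + 2 := by omega
  have e3 : n + 2 * (m + 2) = (m + 2) + (n + m + 2) := by omega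
  rw [e1, e2, e3]
  rcases eq_or_lt_of_le hr0 with h | hrpos
  · -- r = 0 : everything vanishes
    rw [← h]
    simp only [zero_pow (by omega : m + 2 ≠ 0), zero_mul, abs_zero]
    exact hRHS0
  -- main case 0 < r
  set θ : ℝ := ((m+3:ℕ) : ℝ) / ((n:ℝ) + 2 * (((m+3:ℕ):ℝ) - 1)) with hθdef
  have hDpos : (0:ℝ) < (n:ℝ) + 2 * (((m+3:ℕ):ℝ) - 1) := by
    have : (0:ℝ) ≤ (n:ℝ) := n.cast_nonneg
    push_cast; linarith
  have hθ0 : 0 ≤ θ := by positivity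
  have hθ1 : θ ≤ 1 := by
    rw [hθdef, div_le_one hDpos]
    have : (2:ℝ) ≤ (n:ℝ) := by exact_mod_cast hn
    push_cast
    linarith
  set I1 : ℝ := ∫ ρ in r..Rs, b ρ * φ ρ / ρ ^ (m + 2) with hI1def
  set I2 : ℝ := ∫ ρ in (0:ℝ)..r, ρ ^ (n + m + 2) * b ρ * φ ρ with hI2def
  set I3 : ℝ := ∫ ρ in (0:ℝ)..Rs, ρ ^ (n + m + 2) * b ρ * φ ρ with hI3def
  set K : ℝ := B * M * Rs / ((m:ℝ) + 1) with hKdef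
  have hK0 : 0 ≤ K := by positivity
  have bnd1 : r ^ (m + 2) * |I1| ≤ K := by
    have hsub1 : Icc r Rs ⊆ Icc 0 Rs := Icc_subset_Icc hr0 le_rfl
    have hintf : IntervalIntegrable (fun ρ => b ρ * φ ρ / ρ ^ (m+2)) volume r Rs := by
      apply ContinuousOn.intervalIntegrable
      rw [uIcc_of_le hrR]
      exact ((hbcont.mono hsub1).mul (hφ.mono hsub1)).div
        ((continuous_pow _).continuousOn)
        (fun x hx => pow_ne_zero _ (lt_of_lt_of_le hrpos hx.1).ne')
    have hintg : IntervalIntegrable (fun ρ : ℝ => B * M * ρ ^ (-((m:ℤ)+2))) volume r Rs := by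
      apply ContinuousOn.intervalIntegrable
      rw [uIcc_of_le hrR]
      exact continuousOn_const.mul (fun x hx =>
        (continuousAt_zpow₀ x _ (Or.inl (lt_of_lt_of_le hrpos hx.1).ne')).continuousWithinAt)
    have hmono : |I1| ≤ ∫ ρ in r..Rs, B * M * ρ ^ (-((m:ℤ)+2)) := by
      rw [hI1def]
      refine le_trans (intervalIntegral.abs_integral_le_integral_abs hrR) ?_
      refine intervalIntegral.integral_mono_on hrR hintf.abs hintg ?_
      intro x hx
      have hx0 : (0:ℝ) < x := lt_of_lt_of_le hrpos hx.1
      have hxmem : x ∈ Icc (0:ℝ) Rs := ⟨hx0.le, hx.2⟩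
      have h1 : |b x| ≤ B := hB x hxmem
      have h2 : |φ x| ≤ M := hM x hxmem
      have hzp : x ^ (-((m:ℤ)+2)) = (x ^ (m+2 : ℕ))⁻¹ := by
        rw [zpow_neg]
        norm_cast
      rw [abs_div, abs_of_pos (pow_pos hx0 _), hzp, div_eq_mul_inv]
      have hbm : |b x * φ x| ≤ B * M := by
        rw [abs_mul]; exact mul_le_mul h1 h2 (abs_nonneg _) hB0
      exact mul_le_mul_of_nonneg_right hbm (by positivity)
    have h0notin : (0:ℝ) ∉ Set.uIcc r Rs := by
      rw [uIcc_of_le hrR]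
      exact fun h => absurd h.1 (not_le.2 hrpos)
    have hJ : (∫ ρ in r..Rs, B * M * ρ ^ (-((m:ℤ)+2)))
        = B * M * ((Rs ^ (-((m:ℤ)+1)) - r ^ (-((m:ℤ)+1))) / (-((m:ℝ)+1))) := by
      rw [intervalIntegral.integral_const_mul]
      congr 1
      rw [integral_zpow (Or.inr ⟨by omega, h0notin⟩)]
      rw [show (-((m:ℤ)+2)+1) = -((m:ℤ)+1) from by ring]
      push_cast
      ring
    have hE : (0:ℝ) < ((m:ℝ)+1) := by positivity
    have hrE : (0:ℝ) < r ^ (-((m:ℤ)+1)) := zpow_pos hrpos _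
    have hRsE : (0:ℝ) < Rs ^ (-((m:ℤ)+1)) := zpow_pos hRs _
    have hJle : (Rs ^ (-((m:ℤ)+1)) - r ^ (-((m:ℤ)+1))) / (-((m:ℝ)+1))
        ≤ r ^ (-((m:ℤ)+1)) / ((m:ℝ)+1) := by
      rw [div_neg, ← neg_div, neg_sub]
      exact div_le_div₀ hrE.le (by linarith) hE le_rfl
    have hIle : |I1| ≤ B * M * (r ^ (-((m:ℤ)+1)) / ((m:ℝ)+1)) := by
      refine hmono.trans ?_
      rw [hJ]
      exact mul_le_mul_of_nonneg_left hJle (by positivity)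
    have hrr : (r:ℝ) ^ (m+2) * r ^ (-((m:ℤ)+1)) = r := by
      rw [← zpow_natCast r (m+2), ← zpow_add₀ hrpos.ne',
        show ((m+2:ℕ):ℤ) + (-((m:ℤ)+1)) = 1 from by push_cast; ring, zpow_one]
    have hfin : r ^ (m+2) * (B * M * (r ^ (-((m:ℤ)+1)) / ((m:ℝ)+1))) = B * M * r / ((m:ℝ)+1) := by
      rw [show r ^ (m+2) * (B * M * (r ^ (-((m:ℤ)+1)) / ((m:ℝ)+1)))
          = B * M * (r ^ (m+2) * r ^ (-((m:ℤ)+1))) / ((m:ℝ)+1) from by ring, hrr]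
    calc r ^ (m+2) * |I1| ≤ r ^ (m+2) * (B * M * (r ^ (-((m:ℤ)+1)) / ((m:ℝ)+1))) :=
          mul_le_mul_of_nonneg_left hIle (pow_nonneg hr0 _)
      _ = B * M * r / ((m:ℝ)+1) := hfin
      _ ≤ K := by
          rw [hKdef]
          gcongr
  have bnd23 : ∀ s : ℝ, 0 < s → s ≤ Rs →
      |∫ ρ in (0:ℝ)..s, ρ ^ (n + m + 2) * b ρ * φ ρ| ≤ B * M * s ^ (n + m + 3) / ((n:ℝ) + m + 3) := by
    intro s hs hsR
    have hsub : Icc (0:ℝ) s ⊆ Icc 0 Rs := Icc_subset_Icc le_rfl hsR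
    have hintf : IntervalIntegrable (fun ρ => ρ ^ (n+m+2) * b ρ * φ ρ) volume 0 s := by
      apply ContinuousOn.intervalIntegrable
      rw [uIcc_of_le hs.le]
      exact ((continuous_pow _).continuousOn.mul (hbcont.mono hsub)).mul (hφ.mono hsub)
    have hintg : IntervalIntegrable (fun ρ : ℝ => ρ ^ (n+m+2) * B * M) volume 0 s :=
      Continuous.intervalIntegrable (by continuity) _ _
    have hmono : |∫ ρ in (0:ℝ)..s, ρ ^ (n+m+2) * b ρ * φ ρ|
        ≤ ∫ ρ in (0:ℝ)..s, ρ ^ (n+m+2) * B * M := by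
      refine le_trans (intervalIntegral.abs_integral_le_integral_abs hs.le) ?_
      refine intervalIntegral.integral_mono_on hs.le hintf.abs hintg ?_
      intro x hx
      have hx0 : (0:ℝ) ≤ x := hx.1
      have hxmem : x ∈ Icc (0:ℝ) Rs := ⟨hx0, hx.2.trans hsR⟩
      have h1 : |b x| ≤ B := hB x hxmem
      have h2 : |φ x| ≤ M := hM x hxmem
      simp only [abs_mul, abs_of_nonneg (pow_nonneg hx0 (n+m+2))]
      exact mul_le_mul (mul_le_mul le_rfl h1 (abs_nonneg _) (pow_nonneg hx0 _)) h2
        (abs_nonneg _) (by positivity)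
    refine hmono.trans (le_of_eq ?_)
    rw [intervalIntegral.integral_mul_const, intervalIntegral.integral_mul_const, integral_pow]
    rw [zero_pow (by omega : n + m + 2 + 1 ≠ 0)]
    rw [show n + m + 2 + 1 = n + m + 3 from by omega]
    push_cast
    ring
  have hBMrR : B * M * r ≤ B * M * Rs := mul_le_mul_of_nonneg_left hrR (by positivity)
  have hden : ((m:ℝ) + 1) ≤ (n:ℝ) + m + 3 := by
    have : (0:ℝ) ≤ (n:ℝ) := n.cast_nonneg
    linarith
  have hlast : B * M * Rs / ((n:ℝ) + m + 3) ≤ K := by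
    rw [hKdef]
    exact div_le_div₀ (by positivity) le_rfl (by positivity) hden
  have bnd2 : r ^ (m + 2) * (|I2| / r ^ ((m + 2) + (n + m + 2))) ≤ K := by
    have hrne : (r:ℝ) ^ (m+2) ≠ 0 := pow_ne_zero _ hrpos.ne'
    have hEq : r ^ (m+2) * (|I2| / r ^ ((m+2)+(n+m+2))) = |I2| / r ^ (n+m+2) := by
      rw [pow_add]
      field_simp
      ring
    rw [hEq]
    have h2 := bnd23 r hrpos hrR
    have hstep : |I2| / r ^ (n+m+2) ≤ (B * M * r ^ (n+m+3) / ((n:ℝ)+m+3)) / r ^ (n+m+2) := by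
      gcongr
    refine hstep.trans ?_
    have hpow : r ^ (n+m+3) = r ^ (n+m+2) * r := by
      rw [show n+m+3 = (n+m+2)+1 from by omega, pow_succ]
    have hEq2 : (B * M * r ^ (n+m+3) / ((n:ℝ)+m+3)) / r ^ (n+m+2) = B * M * r / ((n:ℝ)+m+3) := by
      rw [hpow]
      have hrne2 : (r:ℝ) ^ (n+m+2) ≠ 0 := pow_ne_zero _ hrpos.ne'
      field_simp
    rw [hEq2]
    refine le_trans ?_ hlast
    gcongr
  have bnd3 : r ^ (m + 2) * (|I3| / Rs ^ ((m + 2) + (n + m + 2))) ≤ K := by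
    have h3 := bnd23 Rs hRs le_rfl
    have hle : r ^ (m+2) * (|I3| / Rs ^ ((m+2)+(n+m+2)))
        ≤ Rs ^ (m+2) * (|I3| / Rs ^ ((m+2)+(n+m+2))) := by
      gcongr
    refine hle.trans ?_
    have hRsne : (Rs:ℝ) ^ (m+2) ≠ 0 := pow_ne_zero _ hRs.ne'
    have hEq : Rs ^ (m+2) * (|I3| / Rs ^ ((m+2)+(n+m+2))) = |I3| / Rs ^ (n+m+2) := by
      rw [pow_add]
      field_simp
      ring
    rw [hEq]
    have hstep : |I3| / Rs ^ (n+m+2) ≤ (B * M * Rs ^ (n+m+3) / ((n:ℝ)+m+3)) / Rs ^ (n+m+2) := by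
      gcongr
    refine hstep.trans ?_
    have hpow : Rs ^ (n+m+3) = Rs ^ (n+m+2) * Rs := by
      rw [show n+m+3 = (n+m+2)+1 from by omega, pow_succ]
    have hEq2 : (B * M * Rs ^ (n+m+3) / ((n:ℝ)+m+3)) / Rs ^ (n+m+2) = B * M * Rs / ((n:ℝ)+m+3) := by
      rw [hpow]
      have hRsne2 : (Rs:ℝ) ^ (n+m+2) ≠ 0 := pow_ne_zero _ hRs.ne'
      field_simp
    rw [hEq2]
    exact hlast
  -- combine
  have hrp : (0:ℝ) ≤ r ^ (m + 2) := pow_nonneg hr0 _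
  have hXb : r ^ (m+2) * |θ * I1 - (1 - θ) * I2 / r ^ ((m+2)+(n+m+2))
      + (1 - θ) * I3 / Rs ^ ((m+2)+(n+m+2))| ≤ 3 * K := by
    have htri : |θ * I1 - (1 - θ) * I2 / r ^ ((m+2)+(n+m+2))
        + (1 - θ) * I3 / Rs ^ ((m+2)+(n+m+2))|
        ≤ θ * |I1| + (1 - θ) * (|I2| / r ^ ((m+2)+(n+m+2)))
          + (1 - θ) * (|I3| / Rs ^ ((m+2)+(n+m+2))) := by
      have h1 : |θ * I1| = θ * |I1| := by
        rw [abs_mul, abs_of_nonneg hθ0]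
      have h2 : |(1 - θ) * I2 / r ^ ((m+2)+(n+m+2))| = (1 - θ) * (|I2| / r ^ ((m+2)+(n+m+2))) := by
        rw [abs_div, abs_mul, abs_of_nonneg (by linarith : (0:ℝ) ≤ 1 - θ),
          abs_of_nonneg (pow_nonneg hr0 _), mul_div_assoc]
      have h3 : |(1 - θ) * I3 / Rs ^ ((m+2)+(n+m+2))| = (1 - θ) * (|I3| / Rs ^ ((m+2)+(n+m+2))) := by
        rw [abs_div, abs_mul, abs_of_nonneg (by linarith : (0:ℝ) ≤ 1 - θ),
          abs_of_nonneg (pow_nonneg hRs.le _), mul_div_assoc]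
      calc |θ * I1 - (1 - θ) * I2 / r ^ ((m+2)+(n+m+2)) + (1 - θ) * I3 / Rs ^ ((m+2)+(n+m+2))|
          ≤ |θ * I1 - (1 - θ) * I2 / r ^ ((m+2)+(n+m+2))| + |(1 - θ) * I3 / Rs ^ ((m+2)+(n+m+2))| :=
            abs_add_le _ _
        _ ≤ |θ * I1| + |(1 - θ) * I2 / r ^ ((m+2)+(n+m+2))| + |(1 - θ) * I3 / Rs ^ ((m+2)+(n+m+2))| := by
            have := abs_sub (θ * I1) ((1 - θ) * I2 / r ^ ((m+2)+(n+m+2)))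
            linarith
        _ = _ := by rw [h1, h2, h3]
    have hexp : r ^ (m+2) * (θ * |I1| + (1 - θ) * (|I2| / r ^ ((m+2)+(n+m+2)))
        + (1 - θ) * (|I3| / Rs ^ ((m+2)+(n+m+2))))
        = θ * (r ^ (m+2) * |I1|) + (1 - θ) * (r ^ (m+2) * (|I2| / r ^ ((m+2)+(n+m+2))))
          + (1 - θ) * (r ^ (m+2) * (|I3| / Rs ^ ((m+2)+(n+m+2)))) := by ring
    have t1 : θ * (r ^ (m+2) * |I1|) ≤ K := by
      calc θ * (r ^ (m+2) * |I1|) ≤ 1 * K :=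
            mul_le_mul hθ1 bnd1 (by positivity) one_pos.le
        _ = K := one_mul K
    have t2 : (1 - θ) * (r ^ (m+2) * (|I2| / r ^ ((m+2)+(n+m+2)))) ≤ K := by
      calc (1 - θ) * (r ^ (m+2) * (|I2| / r ^ ((m+2)+(n+m+2)))) ≤ 1 * K :=
            mul_le_mul (by linarith) bnd2 (by positivity) one_pos.le
        _ = K := one_mul K
    have t3 : (1 - θ) * (r ^ (m+2) * (|I3| / Rs ^ ((m+2)+(n+m+2)))) ≤ K := by
      calc (1 - θ) * (r ^ (m+2) * (|I3| / Rs ^ ((m+2)+(n+m+2)))) ≤ 1 * K :=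
            mul_le_mul (by linarith) bnd3 (by positivity) one_pos.le
        _ = K := one_mul K
    calc r ^ (m+2) * |θ * I1 - (1 - θ) * I2 / r ^ ((m+2)+(n+m+2))
          + (1 - θ) * I3 / Rs ^ ((m+2)+(n+m+2))|
        ≤ r ^ (m+2) * (θ * |I1| + (1 - θ) * (|I2| / r ^ ((m+2)+(n+m+2)))
            + (1 - θ) * (|I3| / Rs ^ ((m+2)+(n+m+2)))) := by
          exact mul_le_mul_of_nonneg_left htri hrp
      _ = _ := hexp
      _ ≤ 3 * K := by linarith
  have hfinal : P * (3 * K) ≤ 12 * (P + 1) * (B + 1) * Rs * ((m + 3 : ℕ) : ℝ)⁻¹ * M := by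
    rw [hKdef]
    have hm1 : (0:ℝ) < (m:ℝ) + 1 := by positivity
    have hm3 : (0:ℝ) < ((m + 3 : ℕ) : ℝ) := by positivity
    rw [inv_eq_one_div, show (12 * (P + 1) * (B + 1) * Rs * (1 / ((m + 3 : ℕ) : ℝ)) * M)
      = (12 * (P + 1) * (B + 1) * Rs * M) / ((m + 3 : ℕ) : ℝ) by ring,
      show P * (3 * (B * M * Rs / ((m:ℝ) + 1))) = (3 * P * B * M * Rs) / ((m:ℝ) + 1) by ring,
      div_le_div_iff₀ hm1 hm3]
    push_cast
    nlinarith [mul_nonneg hP0 hB0, mul_nonneg (mul_nonneg hP0 hB0) hM0,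
      mul_nonneg (mul_nonneg (mul_nonneg hP0 hB0) hM0) hRs.le,
      mul_nonneg hM0 hRs.le, mul_nonneg hP0 (mul_nonneg hM0 hRs.le),
      mul_nonneg hB0 (mul_nonneg hM0 hRs.le),
      mul_nonneg (mul_nonneg (mul_nonneg (mul_nonneg hP0 hB0) hM0) hRs.le) (Nat.cast_nonneg (α := ℝ) m)]
  calc |r ^ (m + 2) * p r * (θ * I1 - (1 - θ) * I2 / r ^ ((m+2)+(n+m+2))
        + (1 - θ) * I3 / Rs ^ ((m+2)+(n+m+2)))|
      = |p r| * (r ^ (m+2) * |θ * I1 - (1 - θ) * I2 / r ^ ((m+2)+(n+m+2))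
          + (1 - θ) * I3 / Rs ^ ((m+2)+(n+m+2))|) := by
        rw [abs_mul, abs_mul, abs_of_nonneg hrp]; ring
    _ ≤ P * (3 * K) := by
        have hPr : |p r| ≤ P := hP r ⟨hr0, hrR⟩
        exact mul_le_mul hPr hXb (by positivity) hP0
    _ ≤ _ := hfinal
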